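/- Let X ~ N(0, h) with h > 0 and E_c := exp(c·X − c²h/2). Define D(E_c) := c·h·E_c on the span of exponentials. Then for all c, d ∈ ℂ: ⟨D E_c, E_d⟩ = ⟨E_c, (M_X − D) E_d⟩, where M_X is multiplication by X and ⟨f,g⟩ = E[f·conj(g)]. Equivalently, c·h·exp(c·conj(d)·h) = E[E_c · conj(X·E_d − d·h·E_d)]. -/

import Mathlib

open MeasureTheory ProbabilityTheory Complex NNReal Filter Set

section helpers

lemma norm_cexp_quad (b c : ℂ) (x : ℝ) :
    ‖cexp (b * x ^ 2 + c * x)‖ = Real.exp (b.re * x ^ 2 + c.re * x) := by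
  rw [Complex.norm_exp]
  congr 1
  simp [← Complex.ofReal_pow, Complex.add_re, Complex.mul_re]

lemma tendsto_cexp_quad_atTop {b : ℂ} (hb : b.re < 0) (c : ℂ) :
    Tendsto (fun x : ℝ => cexp (b * x ^ 2 + c * x)) atTop (nhds 0) := by
  have hb0 : b.re ≠ 0 := ne_of_lt hb
  rw [tendsto_zero_iff_norm_tendsto_zero]
  simp only [norm_cexp_quad]
  have key : ∀ x : ℝ, b.re * x ^ 2 + c.re * x =
      b.re * (x + c.re / (2 * b.re)) ^ 2 - c.re ^ 2 / (4 * b.re) := by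
    intro x; field_simp; ring
  simp only [key]
  apply Real.tendsto_exp_atBot.comp
  apply tendsto_atBot_add_const_right
  apply Tendsto.const_mul_atTop_of_neg hb
  exact (tendsto_pow_atTop two_ne_zero).comp (tendsto_atTop_add_const_right _ _ tendsto_id)

lemma tendsto_cexp_quad_atBot {b : ℂ} (hb : b.re < 0) (c : ℂ) :
    Tendsto (fun x : ℝ => cexp (b * x ^ 2 + c * x)) atBot (nhds 0) := by
  have := (tendsto_cexp_quad_atTop hb (-c)).comp tendsto_neg_atBot_atTop
  convert this using 2 with x
  simp only [Function.comp_apply]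
  congr 1
  push_cast
  ring

lemma integrable_mul_cexp_quad {b : ℂ} (hb : b.re < 0) (c : ℂ) :
    Integrable (fun x : ℝ => (x : ℂ) * cexp (b * x ^ 2 + c * x)) := by
  have h1 := integrable_cexp_quadratic' hb (c + 1) 0
  have h2 := integrable_cexp_quadratic' hb (c - 1) 0
  refine Integrable.mono' ((h1.norm).add (h2.norm)) ?_ ?_
  · apply Continuous.aestronglyMeasurable
    exact Complex.continuous_ofReal.mul (Complex.continuous_exp.comp (by continuity))
  · filter_upwards with x
    rw [norm_mul, Complex.norm_real, norm_cexp_quad]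
    simp only [add_zero, norm_cexp_quad]
    have h3 : ((c:ℂ) + 1).re = c.re + 1 := by simp
    have h4 : ((c:ℂ) - 1).re = c.re - 1 := by simp
    rw [h3, h4]
    have hx : |x| ≤ Real.exp x + Real.exp (-x) := by
      rcases le_or_gt 0 x with hx | hx
      · rw [_root_.abs_of_nonneg hx]
        calc x ≤ Real.exp x := (Real.add_one_le_exp x).trans' (by linarith)
        _ ≤ _ := le_add_of_nonneg_right (Real.exp_pos _).le
      · rw [_root_.abs_of_neg hx]
        calc -x ≤ Real.exp (-x) := (Real.add_one_le_exp (-x)).trans' (by linarith)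
        _ ≤ _ := le_add_of_nonneg_left (Real.exp_pos _).le
    calc |x| * Real.exp (b.re * x ^ 2 + c.re * x)
        ≤ (Real.exp x + Real.exp (-x)) * Real.exp (b.re * x ^ 2 + c.re * x) := by
          exact mul_le_mul_of_nonneg_right hx (Real.exp_pos _).le
      _ = _ := by
          simp only [Pi.add_apply]
          rw [add_mul, ← Real.exp_add, ← Real.exp_add]
          ring_nf

lemma integral_mul_cexp_quad {b : ℂ} (hb : b.re < 0) (c : ℂ) :
    ∫ x : ℝ, (x : ℂ) * cexp (b * x ^ 2 + c * x) =
      -c / (2 * b) * ∫ x : ℝ, cexp (b * x ^ 2 + c * x) := by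
  have hb0 : b ≠ 0 := fun h => by simp [h] at hb
  have hint : Integrable (fun x : ℝ => cexp (b * x ^ 2 + c * x)) := by
    simpa using integrable_cexp_quadratic' hb c 0
  have hxint := integrable_mul_cexp_quad hb c
  set g : ℝ → ℂ := fun x => cexp (b * (x:ℂ) ^ 2 + c * x) with hg
  have hderiv : ∀ x : ℝ, HasDerivAt g ((2 * b * x + c) * g x) x := by
    intro x
    have : HasDerivAt (fun y : ℝ => b * (y:ℂ) ^ 2 + c * y) (2 * b * x + c) x := by
      have h1 : HasDerivAt (fun y : ℂ => b * y ^ 2 + c * y) (2 * b * x + c) (x : ℂ) := by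
        have := ((hasDerivAt_pow 2 (x:ℂ)).const_mul b).add ((hasDerivAt_id (x:ℂ)).const_mul c)
        exact this.congr_deriv (by push_cast; ring)
      exact h1.comp_ofReal
    convert this.cexp using 1
    ring
  have hdint : Integrable (fun x : ℝ => (2 * b * x + c) * g x) := by
    have : (fun x : ℝ => (2 * b * (x:ℂ) + c) * g x)
        = fun x : ℝ => (2 * b) * ((x:ℂ) * g x) + c * g x := by
      funext x; ring
    rw [this]
    exact ((hxint.const_mul _).add (hint.const_mul _))
  have hzero : ∫ x : ℝ, (2 * b * (x:ℂ) + c) * g x = 0 := by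
    rw [← intervalIntegral.integral_Iic_add_Ioi (b := (0:ℝ)) hdint.integrableOn hdint.integrableOn]
    rw [integral_Iic_of_hasDerivAt_of_tendsto' (fun x _ => hderiv x) hdint.integrableOn
      (tendsto_cexp_quad_atBot hb c),
      integral_Ioi_of_hasDerivAt_of_tendsto' (fun x _ => hderiv x) hdint.integrableOn
      (tendsto_cexp_quad_atTop hb c)]
    ring
  have hsplit : ∫ x : ℝ, (2 * b * (x:ℂ) + c) * g x
      = 2 * b * (∫ x : ℝ, (x:ℂ) * g x) + c * ∫ x : ℝ, g x := by
    rw [← integral_const_mul, ← integral_const_mul, ← integral_add (hxint.const_mul _)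
      (hint.const_mul _)]
    congr 1; funext x; ring
  rw [hsplit] at hzero
  have hone : ∫ x : ℝ, (x:ℂ) * g x = ∫ x : ℝ, (x:ℂ) * cexp (b * x ^ 2 + c * x) := rfl
  have htwo : (∫ x : ℝ, g x) = ∫ x : ℝ, cexp (b * x ^ 2 + c * x) := rfl
  have h2b : (2 : ℂ) * b ≠ 0 := by simp [hb0]
  rw [← hone, ← htwo, div_mul_eq_mul_div, eq_div_iff h2b]
  linear_combination hzero

end helpers

/-- the adjoint relation ⟨D E_c, E_d⟩ = ⟨E_c, (M_X − D) E_d⟩. -/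
theorem stmt_10 {Ω : Type*} [MeasurableSpace Ω] (P : Measure Ω) [IsProbabilityMeasure P]
    (X : Ω → ℝ) (hX : Measurable X) (h : ℝ≥0) (hpos : 0 < h)
    (hlaw : Measure.map X P = gaussianReal 0 h) (c d : ℂ) :
    c * (h : ℝ) * Complex.exp (c * (starRingEnd ℂ) d * (h : ℝ)) =
    ∫ ω, Complex.exp (c * X ω - c ^ 2 * (h : ℝ) / 2) *
        (starRingEnd ℂ) ((X ω : ℂ) * Complex.exp (d * X ω - d ^ 2 * (h : ℝ) / 2) -
          d * (h : ℝ) * Complex.exp (d * X ω - d ^ 2 * (h : ℝ) / 2)) ∂P := by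
  set k : ℂ := (starRingEnd ℂ) d with hk
  set F : ℝ → ℂ := fun x => Complex.exp (c * x - c ^ 2 * (h : ℝ) / 2) *
      (starRingEnd ℂ) ((x : ℂ) * Complex.exp (d * x - d ^ 2 * (h : ℝ) / 2) -
        d * (h : ℝ) * Complex.exp (d * x - d ^ 2 * (h : ℝ) / 2)) with hF
  have hFcont : Continuous F := by
    apply Continuous.mul
    · exact Complex.continuous_exp.comp (by continuity)
    · exact Complex.continuous_conj.comp (by continuity)
  have step1 : ∫ ω, F (X ω) ∂P = ∫ x, F x ∂(gaussianReal 0 h) := by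
    rw [← hlaw]
    exact (integral_map hX.aemeasurable hFcont.aestronglyMeasurable).symm
  have hh0 : ((h:ℝ):ℂ) ≠ 0 := by
    simp [Complex.ofReal_ne_zero, ne_of_gt hpos]
  set B : ℂ := -(1 / (2 * ((h:ℝ):ℂ))) with hB
  have hBre : B.re < 0 := by
    rw [hB]
    have : (2 * ((h:ℝ):ℂ)) = ((2 * (h:ℝ) : ℝ) : ℂ) := by push_cast; ring
    rw [this, ← Complex.ofReal_one, ← Complex.ofReal_div]
    simp only [← Complex.ofReal_neg, Complex.ofReal_re]
    have h2 : (0:ℝ) < 2 * (h:ℝ) := by positivity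
    simp [div_pos, h2]
    exact hpos
  set A : ℂ := c + k with hA
  set E : ℂ := -((c ^ 2 + k ^ 2) * ((h:ℝ):ℂ) / 2) with hE
  set s : ℂ := ((Real.sqrt (2 * Real.pi * (h:ℝ)) : ℝ) : ℂ) with hs
  have key : ∀ x : ℝ, ((gaussianPDFReal 0 h x : ℝ) : ℂ) * F x =
      (s⁻¹ * cexp E) * ((x:ℂ) * cexp (B * x ^ 2 + A * x)) -
        (s⁻¹ * cexp E * (k * ((h:ℝ):ℂ))) * cexp (B * x ^ 2 + A * x) := by
    intro x
    have hconj : (starRingEnd ℂ) ((x : ℂ) * Complex.exp (d * x - d ^ 2 * (h : ℝ) / 2) -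
        d * (h : ℝ) * Complex.exp (d * x - d ^ 2 * (h : ℝ) / 2)) =
        ((x:ℂ) - k * ((h:ℝ):ℂ)) * cexp (k * x - k ^ 2 * ((h:ℝ):ℂ) / 2) := by
      rw [map_sub, map_mul, map_mul, map_mul, ← Complex.exp_conj]
      simp only [map_sub, map_mul, map_div₀, map_pow, Complex.conj_ofReal, map_ofNat, ← hk]
      ring
    rw [hF]
    simp only [hconj, gaussianPDFReal, sub_zero]
    rw [Complex.ofReal_mul, Complex.ofReal_exp, Complex.ofReal_inv]
    rw [show ((-x ^ 2 / (2 * (h:ℝ)) : ℝ) : ℂ) = -(x:ℂ) ^ 2 / (2 * ((h:ℝ):ℂ)) by push_cast; ring]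
    have hexps : (-(x:ℂ) ^ 2 / (2 * ((h:ℝ):ℂ))) + (c * x - c ^ 2 * ((h:ℝ):ℂ) / 2) +
        (k * x - k ^ 2 * ((h:ℝ):ℂ) / 2) = E + (B * x ^ 2 + A * x) := by
      rw [hE, hB, hA]
      field_simp
      ring
    calc s⁻¹ * cexp (-(x:ℂ) ^ 2 / (2 * ((h:ℝ):ℂ))) *
          (cexp (c * x - c ^ 2 * ((h:ℝ):ℂ) / 2) *
            (((x:ℂ) - k * ((h:ℝ):ℂ)) * cexp (k * x - k ^ 2 * ((h:ℝ):ℂ) / 2)))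
        = s⁻¹ * (((x:ℂ) - k * ((h:ℝ):ℂ)) * cexp ((-(x:ℂ) ^ 2 / (2 * ((h:ℝ):ℂ))) +
            (c * x - c ^ 2 * ((h:ℝ):ℂ) / 2) + (k * x - k ^ 2 * ((h:ℝ):ℂ) / 2))) := by
          rw [Complex.exp_add, Complex.exp_add]; ring
      _ = _ := by rw [hexps, Complex.exp_add]; ring
  have step2 : ∫ x, F x ∂(gaussianReal 0 h) = ∫ x, ((gaussianPDFReal 0 h x : ℝ) : ℂ) * F x := by
    rw [gaussianReal_of_var_ne_zero 0 (ne_of_gt hpos)]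
    have hpdf : gaussianPDF 0 h = fun x => ((gaussianPDFReal 0 h x).toNNReal : ENNReal) := rfl
    rw [hpdf, integral_withDensity_eq_integral_smul
      ((measurable_gaussianPDFReal 0 h).real_toNNReal) F]
    congr 1
    funext x
    rw [NNReal.smul_def, Real.coe_toNNReal _ (gaussianPDFReal_nonneg 0 h x),
      Complex.real_smul]
  have hq0 : Integrable (fun x : ℝ => cexp (B * x ^ 2 + A * x)) := by
    simpa using integrable_cexp_quadratic' hBre A 0
  have hq1 := integrable_mul_cexp_quad hBre A
  have step3 : ∫ x, ((gaussianPDFReal 0 h x : ℝ) : ℂ) * F x =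
      (s⁻¹ * cexp E) * (∫ x : ℝ, (x:ℂ) * cexp (B * x ^ 2 + A * x)) -
        (s⁻¹ * cexp E * (k * ((h:ℝ):ℂ))) * ∫ x : ℝ, cexp (B * x ^ 2 + A * x) := by
    simp only [key]
    rw [integral_sub (hq1.const_mul _) (hq0.const_mul _), integral_const_mul, integral_const_mul]
  have step4 := integral_mul_cexp_quad hBre A
  have step5 : ∫ x : ℝ, cexp (B * x ^ 2 + A * x) =
      (Real.pi / -B) ^ (1 / 2 : ℂ) * cexp (0 - A ^ 2 / (4 * B)) := by
    simpa using integral_cexp_quadratic hBre A 0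
  have hs0 : s ≠ 0 := by
    rw [hs]
    simp only [ne_eq, Complex.ofReal_eq_zero]
    positivity
  have f1 : ((Real.pi : ℂ) / -B) = ((2 * Real.pi * (h:ℝ) : ℝ) : ℂ) := by
    rw [hB]
    push_cast
    field_simp
  have f2 : (((2 * Real.pi * (h:ℝ) : ℝ) : ℂ)) ^ (1 / 2 : ℂ) = s := by
    rw [hs, Real.sqrt_eq_rpow, Complex.ofReal_cpow (by positivity) (1/2 : ℝ)]
    norm_num
  have f4 : -A / (2 * B) = A * ((h:ℝ):ℂ) := by
    rw [hB]
    field_simp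
  have merge : cexp E * cexp (0 - A ^ 2 / (4 * B)) = cexp (c * k * ((h:ℝ):ℂ)) := by
    rw [← Complex.exp_add]
    congr 1
    rw [hE, hB, hA]
    field_simp
    ring
  rw [hF] at step1
  rw [step1, step2, step3, step4, step5, f4, f1, f2]
  have hss : s⁻¹ * s = 1 := inv_mul_cancel₀ hs0
  linear_combination (-(c * ((h:ℝ):ℂ))) * merge +
    (-(s⁻¹ * s * ((h:ℝ):ℂ) * cexp E * cexp (0 - A ^ 2 / (4 * B)))) * hA +
    (-(c * ((h:ℝ):ℂ) * cexp E * cexp (0 - A ^ 2 / (4 * B)))) * hss
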